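/- Rank characterization of conformal membership: let z_1, …, z_{n+1} be pairwise distinct real numbers and β ∈ (0,1]. Then z_{n+1} ≤ Q_β(z_1, …, z_n, +∞) if and only if #{ i ∈ {1, …, n+1} : z_i ≤ z_{n+1} } ≤ ⌈β(n+1)⌉, where the quantile is computed over the n+1 values z_1, …, z_n together with +∞. -/

import Mathlib

open MeasureTheory

/-- Empirical `β`-quantile of extended-real values `z 1, …, z m`:
`inf { x ∈ ℝ : (1/m) · #{ i : z i ≤ x } ≥ β }`, with `inf ∅ = +∞` (in `EReal`). -/
noncomputable def empQuantile {m : ℕ} (z : Fin m → EReal) (β : ℝ) : EReal :=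
  sInf ((fun r : ℝ => (r : EReal)) ''
    {r : ℝ | β ≤ ((Finset.univ.filter (fun i => z i ≤ (r : EReal))).card : ℝ) / m})

/-- The empirical `β`-quantile of the `n + 1` values `z 1, …, z n, +∞`. -/
noncomputable def augQuantile {n : ℕ} (z : Fin n → ℝ) (β : ℝ) : EReal :=
  empQuantile (Fin.snoc (fun i => ((z i : ℝ) : EReal)) ⊤) β

/-- Rank characterization of conformal membership: for pairwise distinct reals
`z 1, …, z (n+1)` and `β ∈ (0,1]`,
`z (n+1) ≤ Q_β(z_1, …, z_n, +∞)` iff the rank of `z (n+1)` among all `n + 1` values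
is at most `⌈β(n+1)⌉`. -/
theorem stmt16 (n : ℕ) (z : Fin (n + 1) → ℝ) (hz : Function.Injective z)
    (β : ℝ) (hβ : β ∈ Set.Ioc (0 : ℝ) 1) :
    ((z (Fin.last n) : ℝ) : EReal) ≤
        augQuantile (fun i : Fin n => z (Fin.castSucc i)) β ↔
      (Finset.univ.filter (fun i : Fin (n + 1) =>
          z i ≤ z (Fin.last n))).card ≤ ⌈β * (n + 1)⌉₊ := by
  obtain ⟨hβ0, hβ1⟩ := hβ
  set a : ℝ := z (Fin.last n) with ha
  set k : ℕ := ⌈β * (n + 1)⌉₊ with hk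
  set c : ℝ → ℕ := fun r =>
    (Finset.univ.filter (fun i : Fin n => z (Fin.castSucc i) ≤ r)).card with hc
  have hn1 : (0:ℝ) < (n:ℝ) + 1 := by positivity
  have hk1 : 1 ≤ k := Nat.one_le_ceil_iff.mpr (by positivity)
  -- count over Fin (n+1) with snoc ⊤ equals count over Fin n
  have hcount : ∀ r : ℝ,
      (Finset.univ.filter (fun i : Fin (n + 1) =>
        (Fin.snoc (fun i : Fin n => ((z (Fin.castSucc i) : ℝ) : EReal)) (⊤ : EReal) : Fin (n+1) → EReal) i
          ≤ (r : EReal))).card = c r := by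
    intro r
    simp only [hc]
    rw [Finset.card_filter, Finset.card_filter, Fin.sum_univ_castSucc]
    simp [Fin.snoc_castSucc, Fin.snoc_last, EReal.coe_ne_top, top_le_iff]
  -- the rank R equals c a + 1
  have hR : (Finset.univ.filter (fun i : Fin (n + 1) => z i ≤ a)).card = c a + 1 := by
    simp only [hc]
    rw [Finset.card_filter, Fin.sum_univ_castSucc, Finset.card_filter]
    simp
    exact le_refl _
  -- membership in the quantile set
  have hmem : ∀ r : ℝ,
      (β ≤ ((Finset.univ.filter (fun i : Fin (n + 1) =>
        (Fin.snoc (fun i : Fin n => ((z (Fin.castSucc i) : ℝ) : EReal)) (⊤ : EReal) : Fin (n+1) → EReal) i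
          ≤ (r : EReal))).card : ℝ) / ((n + 1 : ℕ) : ℝ)) ↔ k ≤ c r := by
    intro r
    rw [hcount r, div_eq_inv_mul, le_inv_mul_iff₀ (by exact_mod_cast hn1), mul_comm]
    rw [hk, Nat.ceil_le]
    constructor
    · intro h; exact_mod_cast by push_cast at h ⊢; linarith
    · intro h; exact_mod_cast by push_cast at h ⊢; linarith
  -- reduce LHS to a pointwise statement
  have hLHS : ((a : ℝ) : EReal) ≤
      augQuantile (fun i : Fin n => z (Fin.castSucc i)) β ↔
      ∀ r : ℝ, k ≤ c r → a ≤ r := by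
    rw [augQuantile, empQuantile, le_sInf_iff]
    constructor
    · intro h r hr
      have := h (r : EReal) ⟨r, (hmem r).mpr hr, rfl⟩
      exact_mod_cast this
    · rintro h x ⟨r, hr, rfl⟩
      exact EReal.coe_le_coe_iff.mpr (h r ((hmem r).mp hr))
  rw [hLHS, hR]
  constructor
  · intro h
    by_contra hcon
    push_neg at hcon
    have hka : k ≤ c a := by omega
    have hT : (Finset.univ.filter (fun i : Fin n => z (Fin.castSucc i) ≤ a)).Nonempty := by
      rw [← Finset.card_pos]; exact lt_of_lt_of_le (by omega) hka
    obtain ⟨i0, hi0, hmax⟩ :=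
      Finset.exists_max_image _ (fun i : Fin n => z (Fin.castSucc i)) hT
    have hlt : z (Fin.castSucc i0) < a := by
      refine lt_of_le_of_ne ?_ (fun he => absurd (hz he) (Fin.castSucc_lt_last i0).ne)
      exact (Finset.mem_filter.mp hi0).2
    have hsub : (Finset.univ.filter (fun i : Fin n => z (Fin.castSucc i) ≤ a)) ⊆
        (Finset.univ.filter (fun i : Fin n => z (Fin.castSucc i) ≤ z (Fin.castSucc i0))) := by
      intro j hj
      exact Finset.mem_filter.mpr ⟨Finset.mem_univ _, hmax j hj⟩
    have : k ≤ c (z (Fin.castSucc i0)) := le_trans hka (Finset.card_le_card hsub)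
    exact absurd (h _ this) (not_le.mpr hlt)
  · intro h r hr
    by_contra hcon
    push_neg at hcon
    have hsub : (Finset.univ.filter (fun i : Fin n => z (Fin.castSucc i) ≤ r)) ⊆
        (Finset.univ.filter (fun i : Fin n => z (Fin.castSucc i) ≤ a)) := by
      intro j hj
      exact Finset.mem_filter.mpr ⟨Finset.mem_univ _,
        le_of_lt (lt_of_le_of_lt (Finset.mem_filter.mp hj).2 hcon)⟩
    have h2 : k ≤ c a := le_trans hr (Finset.card_le_card hsub)
    omega
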